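/- arXiv:1608.03339 — 2 statements merged into one kernel-verified Lean document; each statement's English description precedes it below -/
import Mathlib

section
/- Assume ∫ y² dρ(x, y) < ∞ and let λ > 0. Define ξ_λ(z) := (y − ⟨f_λ, φ(x)⟩) φ(x) for z = (x, y) ∈ X × ℝ. Then for every sample D of size N partitioned into disjoint subsets D_1, …, D_m, one has the identity f̄_{D,λ} − f_{D,λ} = Σ_{j=1}^m (|D_j|/|D|) [(L_{D_j} + λI)^{−1} − (L_D + λI)^{−1}] Δ_j, where Δ_j := (1/|D_j|) Σ_{z ∈ D_j} ξ_λ(z) − E_{z∼ρ}[ξ_λ]. -/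
open MeasureTheory
open scoped RealInnerProductSpace

/-- The empirical operator `L_D f = (1/|ι|) Σ_i ⟨f, φ(x_i)⟩ φ(x_i)` associated with a sample
`D = ((x_i, y_i))_i` indexed by a finite type `ι`. -/
noncomputable def empiricalOperator {X H : Type*} [NormedAddCommGroup H]
    [InnerProductSpace ℝ H] (φ : X → H) {ι : Type*} [Fintype ι] (D : ι → X × ℝ) :
    H →L[ℝ] H :=
  (Fintype.card ι : ℝ)⁻¹ • ∑ i, (innerSL ℝ (φ (D i).1)).smulRight (φ (D i).1)

/-- The regularized least squares estimator
`f_{D,λ} := (L_D + λI)^{−1}((1/|ι|) Σ_i y_i φ(x_i))`. -/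
noncomputable def rlsEstimator {X H : Type*} [NormedAddCommGroup H]
    [InnerProductSpace ℝ H] (φ : X → H) (lam : ℝ) {ι : Type*} [Fintype ι]
    (D : ι → X × ℝ) : H :=
  Ring.inverse (empiricalOperator φ D + lam • (1 : H →L[ℝ] H))
    ((Fintype.card ι : ℝ)⁻¹ • ∑ i, (D i).2 • φ (D i).1)

/-- The data-free regularized limit `f_λ := (L + λI)^{−1}(∫ y φ(x) dρ)`. -/
noncomputable def fLam {X H : Type*} [MeasurableSpace X] [NormedAddCommGroup H]
    [InnerProductSpace ℝ H] [CompleteSpace H] (ρ : Measure (X × ℝ)) (φ : X → H)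
    (L : H →L[ℝ] H) (lam : ℝ) : H :=
  Ring.inverse (L + lam • (1 : H →L[ℝ] H)) (∫ z, z.2 • φ z.1 ∂ρ)

set_option maxHeartbeats 1000000

lemma isUnit_add_smul_one {H : Type*} [NormedAddCommGroup H] [InnerProductSpace ℝ H]
    [CompleteSpace H] (T : H →L[ℝ] H)
    (hpos : ∀ f : H, 0 ≤ ⟪T f, f⟫) {lam : ℝ} (hlam : 0 < lam) :
    IsUnit (T + lam • (1 : H →L[ℝ] H)) := by
  set A : H →L[ℝ] H := T + lam • (1 : H →L[ℝ] H) with hA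
  have hco : ∀ f : H, lam * ‖f‖ ^ 2 ≤ ⟪A f, f⟫ := by
    intro f
    have h1 := hpos f
    have : ⟪A f, f⟫ = ⟪T f, f⟫ + lam * ‖f‖ ^ 2 := by
      simp [hA, ContinuousLinearMap.add_apply, ContinuousLinearMap.smul_apply,
        inner_add_left, real_inner_smul_left, real_inner_self_eq_norm_sq]
    linarith
  have hbound : ∀ f : H, ‖f‖ ≤ lam⁻¹ * ‖A f‖ := by
    intro f
    by_cases hf : f = 0
    · simp [hf]
    · have hfn : 0 < ‖f‖ := norm_pos_iff.2 hf
      have h1 : lam * ‖f‖ ^ 2 ≤ ‖A f‖ * ‖f‖ := (hco f).trans (real_inner_le_norm _ _)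
      have h2 : lam * ‖f‖ ≤ ‖A f‖ := by nlinarith
      rw [le_inv_mul_iff₀ hlam]
      exact h2
  have hanti : AntilipschitzWith (Real.toNNReal lam⁻¹) A :=
    ContinuousLinearMap.antilipschitz_of_bound A (by
      intro x
      simpa [Real.coe_toNNReal _ (inv_nonneg.2 hlam.le)] using hbound x)
  have hinj : Function.Injective A := hanti.injective
  have hclosed : IsClosed (Set.range A) := hanti.isClosed_range A.uniformContinuous
  set R : Submodule ℝ H := LinearMap.range (A : H →ₗ[ℝ] H) with hR
  have hRclosed : IsClosed (R : Set H) := by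
    have : (R : Set H) = Set.range A := by
      ext x; simp [hR, LinearMap.mem_range]
    rw [this]; exact hclosed
  have hperp : Rᗮ = ⊥ := by
    rw [Submodule.eq_bot_iff]
    intro v hv
    have h0 : ⟪A v, v⟫ = 0 := hv (A v) ⟨v, rfl⟩
    have h5 : lam * ‖v‖ ^ 2 ≤ 0 := h0 ▸ hco v
    have h7 : lam * ‖v‖ ^ 2 = 0 := le_antisymm h5 (mul_nonneg hlam.le (sq_nonneg _))
    have h8 : ‖v‖ ^ 2 = 0 := by
      rcases mul_eq_zero.1 h7 with h | h
      · exact absurd h hlam.ne'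
      · exact h
    have : ‖v‖ = 0 := by
      have := pow_eq_zero_iff (n := 2) (by norm_num) |>.1 h8
      exact this
    exact norm_eq_zero.1 this
  haveI : CompleteSpace R := hRclosed.completeSpace_coe
  have hRtop : R = ⊤ := by
    have h2 := Submodule.orthogonal_orthogonal R
    rw [hperp] at h2
    rw [← h2, Submodule.bot_orthogonal_eq_top]
  have hker : LinearMap.ker (A : H →ₗ[ℝ] H) = ⊥ := LinearMap.ker_eq_bot.2 hinj
  let e : H ≃L[ℝ] H := ContinuousLinearEquiv.ofBijective A hker hRtop
  refine ⟨⟨A, (e.symm : H →L[ℝ] H), ?_, ?_⟩, rfl⟩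
  · ext x
    simp only [ContinuousLinearMap.mul_apply, ContinuousLinearMap.coe_coe,
      ContinuousLinearMap.one_apply]
    show A (e.symm x) = x
    have : A (e.symm x) = e (e.symm x) := rfl
    rw [this, e.apply_symm_apply]
  · ext x
    simp only [ContinuousLinearMap.mul_apply, ContinuousLinearMap.coe_coe,
      ContinuousLinearMap.one_apply]
    show e.symm (A x) = x
    have : A x = e x := rfl
    rw [this, e.symm_apply_apply]

lemma empiricalOperator_apply {X H : Type*} [NormedAddCommGroup H]
    [InnerProductSpace ℝ H] (φ : X → H) {ι : Type*} [Fintype ι] (D : ι → X × ℝ) (f : H) :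
    empiricalOperator φ D f = (Fintype.card ι : ℝ)⁻¹ • ∑ i, ⟪f, φ (D i).1⟫ • φ (D i).1 := by
  simp [empiricalOperator, ContinuousLinearMap.sum_apply, real_inner_comm]

lemma empiricalOperator_pos {X H : Type*} [NormedAddCommGroup H]
    [InnerProductSpace ℝ H] (φ : X → H) {ι : Type*} [Fintype ι] (D : ι → X × ℝ) (f : H) :
    0 ≤ ⟪empiricalOperator φ D f, f⟫ := by
  rw [empiricalOperator_apply, real_inner_smul_left, sum_inner]
  apply mul_nonneg (by positivity)
  apply Finset.sum_nonneg
  intro i _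
  rw [real_inner_smul_left, real_inner_comm]
  exact mul_self_nonneg (⟪φ (D i).1, f⟫ : ℝ)

lemma integrable_inner_smul {X H : Type*} [MeasurableSpace X]
    [NormedAddCommGroup H] [InnerProductSpace ℝ H]
    [SecondCountableTopology H] [MeasurableSpace H] [BorelSpace H]
    (ρ : Measure (X × ℝ)) [IsProbabilityMeasure ρ]
    (φ : X → H) (hφ : Measurable φ) (κ : ℝ) (hκ : ∀ x, ‖φ x‖ ≤ κ) (f : H) :
    Integrable (fun x => (⟪f, φ x⟫ : ℝ) • φ x) ρ.fst := by
  have hm : Measurable (fun x => (⟪f, φ x⟫ : ℝ) • φ x) :=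
    (measurable_const.inner hφ).smul hφ
  refine Integrable.mono' (integrable_const (‖f‖ * κ * κ)) hm.aestronglyMeasurable ?_
  filter_upwards with x
  rw [norm_smul]
  have h1 : ‖(⟪f, φ x⟫ : ℝ)‖ ≤ ‖f‖ * ‖φ x‖ := by
    simpa using abs_real_inner_le_norm f (φ x)
  have h2 := hκ x
  have h0 := norm_nonneg (φ x)
  calc ‖(⟪f, φ x⟫ : ℝ)‖ * ‖φ x‖ ≤ (‖f‖ * ‖φ x‖) * ‖φ x‖ := mul_le_mul_of_nonneg_right h1 h0
    _ ≤ ‖f‖ * κ * κ := by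
      have := mul_le_mul_of_nonneg_left (mul_le_mul h2 h2 h0 (h0.trans h2)) (norm_nonneg f)
      nlinarith [this]

lemma integrable_inner_smul' {X H : Type*} [MeasurableSpace X]
    [NormedAddCommGroup H] [InnerProductSpace ℝ H]
    [SecondCountableTopology H] [MeasurableSpace H] [BorelSpace H]
    (ρ : Measure (X × ℝ)) [IsProbabilityMeasure ρ]
    (φ : X → H) (hφ : Measurable φ) (κ : ℝ) (hκ : ∀ x, ‖φ x‖ ≤ κ) (f : H) :
    Integrable (fun z : X × ℝ => (⟪f, φ z.1⟫ : ℝ) • φ z.1) ρ := by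
  have h := integrable_inner_smul ρ φ hφ κ hκ f
  rw [Measure.fst] at h
  exact (integrable_map_measure h.aestronglyMeasurable measurable_fst.aemeasurable).1 h

lemma integral_inner_smul_fst {X H : Type*} [MeasurableSpace X]
    [NormedAddCommGroup H] [InnerProductSpace ℝ H] [CompleteSpace H]
    [SecondCountableTopology H] [MeasurableSpace H] [BorelSpace H]
    (ρ : Measure (X × ℝ)) [IsProbabilityMeasure ρ]
    (φ : X → H) (hφ : Measurable φ) (f : H) :
    ∫ z : X × ℝ, (⟪f, φ z.1⟫ : ℝ) • φ z.1 ∂ρ = ∫ x, (⟪f, φ x⟫ : ℝ) • φ x ∂ρ.fst := by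
  rw [Measure.fst, integral_map measurable_fst.aemeasurable]
  exact ((measurable_const.inner hφ).smul hφ).aestronglyMeasurable

lemma integrable_y_smul {X H : Type*} [MeasurableSpace X]
    [NormedAddCommGroup H] [InnerProductSpace ℝ H]
    [SecondCountableTopology H] [MeasurableSpace H] [BorelSpace H]
    (ρ : Measure (X × ℝ)) [IsProbabilityMeasure ρ]
    (φ : X → H) (hφ : Measurable φ) (κ : ℝ) (hκ : ∀ x, ‖φ x‖ ≤ κ)
    (hy2 : Integrable (fun z : X × ℝ => z.2 ^ 2) ρ) :
    Integrable (fun z : X × ℝ => z.2 • φ z.1) ρ := by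
  have hm : Measurable (fun z : X × ℝ => z.2 • φ z.1) :=
    measurable_snd.smul (hφ.comp measurable_fst)
  refine Integrable.mono' ((hy2.add (integrable_const 1)).const_mul κ) hm.aestronglyMeasurable ?_
  filter_upwards with z
  rw [norm_smul]
  have h1 : ‖φ z.1‖ ≤ κ := hκ z.1
  have h2 : ‖z.2‖ = |z.2| := rfl
  have h3 : |z.2| ≤ z.2 ^ 2 + 1 := by nlinarith [abs_nonneg z.2, sq_abs z.2]
  have h4 : (0:ℝ) ≤ z.2 ^ 2 + 1 := by positivity
  calc ‖z.2‖ * ‖φ z.1‖ ≤ (z.2 ^ 2 + 1) * κ := by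
        rw [h2]; exact mul_le_mul h3 h1 (norm_nonneg _) h4
    _ = κ * (z.2 ^ 2 + 1) := mul_comm _ _

lemma integral_xi {X H : Type*} [MeasurableSpace X]
    [NormedAddCommGroup H] [InnerProductSpace ℝ H] [CompleteSpace H]
    [SecondCountableTopology H] [MeasurableSpace H] [BorelSpace H]
    (ρ : Measure (X × ℝ)) [IsProbabilityMeasure ρ]
    (φ : X → H) (hφ : Measurable φ) (κ : ℝ) (hκ : ∀ x, ‖φ x‖ ≤ κ)
    (L : H →L[ℝ] H) (hL : ∀ f, L f = ∫ x, ⟪f, φ x⟫ • φ x ∂ρ.fst)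
    (hy2 : Integrable (fun z : X × ℝ => z.2 ^ 2) ρ)
    (lam : ℝ) (hUL : IsUnit (L + lam • (1 : H →L[ℝ] H))) :
    ∫ z : X × ℝ, (z.2 - ⟪fLam ρ φ L lam, φ z.1⟫) • φ z.1 ∂ρ
      = lam • fLam ρ φ L lam := by
  set fl := fLam ρ φ L lam with hfl
  have h1 : Integrable (fun z : X × ℝ => z.2 • φ z.1) ρ :=
    integrable_y_smul ρ φ hφ κ hκ hy2
  have h2 := integrable_inner_smul' ρ φ hφ κ hκ fl
  have hsplit : ∫ z : X × ℝ, (z.2 - ⟪fl, φ z.1⟫) • φ z.1 ∂ρ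
      = (∫ z : X × ℝ, z.2 • φ z.1 ∂ρ) - ∫ z : X × ℝ, (⟪fl, φ z.1⟫ : ℝ) • φ z.1 ∂ρ := by
    rw [← integral_sub h1 h2]
    congr 1
    funext z
    rw [sub_smul]
  rw [hsplit, integral_inner_smul_fst ρ φ hφ fl, ← hL fl]
  have h3 : (L + lam • (1 : H →L[ℝ] H)) fl = ∫ z : X × ℝ, z.2 • φ z.1 ∂ρ := by
    rw [hfl]
    show (L + lam • (1 : H →L[ℝ] H))
      (Ring.inverse (L + lam • (1 : H →L[ℝ] H)) (∫ z : X × ℝ, z.2 • φ z.1 ∂ρ)) = _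
    rw [← ContinuousLinearMap.mul_apply, Ring.mul_inverse_cancel _ hUL,
      ContinuousLinearMap.one_apply]
  rw [← h3]
  simp only [ContinuousLinearMap.add_apply, ContinuousLinearMap.smul_apply,
    ContinuousLinearMap.one_apply]
  abel

/-- **Representation of the distributed–global difference.**
Assume `∫ y² dρ < ∞` and `λ > 0`, and set `ξ_λ(z) := (y − ⟨f_λ, φ(x)⟩) φ(x)`.  For every
sample `D` of size `N` partitioned into disjoint subsets `D_1, …, D_m` (here of sizes
`k 1, …, k m`, the full sample being indexed by the sigma type `(j : Fin m) × Fin (k j)`),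
the distributed estimator `f̄_{D,λ} := Σ_j (|D_j|/|D|) f_{D_j,λ}` satisfies
`f̄_{D,λ} − f_{D,λ} = Σ_j (|D_j|/|D|) [(L_{D_j} + λI)^{−1} − (L_D + λI)^{−1}] Δ_j`, where
`Δ_j := (1/|D_j|) Σ_{z ∈ D_j} ξ_λ(z) − E[ξ_λ]`. -/
theorem distributed_difference_representation
    {X H : Type*} [MeasurableSpace X] [StandardBorelSpace X]
    [NormedAddCommGroup H] [InnerProductSpace ℝ H] [CompleteSpace H]
    [SecondCountableTopology H] [MeasurableSpace H] [BorelSpace H]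
    (ρ : Measure (X × ℝ)) [IsProbabilityMeasure ρ]
    (φ : X → H) (hφ : Measurable φ) (κ : ℝ) (hκ : ∀ x, ‖φ x‖ ≤ κ)
    (L : H →L[ℝ] H) (hL : ∀ f, L f = ∫ x, ⟪f, φ x⟫ • φ x ∂ρ.fst)
    (hy2 : Integrable (fun z : X × ℝ => z.2 ^ 2) ρ)
    (lam : ℝ) (hlam : 0 < lam)
    (m : ℕ) (k : Fin m → ℕ) (hk : ∀ j, 0 < k j)
    (D : (j : Fin m) → Fin (k j) → X × ℝ) :
    (∑ j, ((k j : ℝ) / ((∑ j', k j' : ℕ) : ℝ)) • rlsEstimator φ lam (D j))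
        - rlsEstimator φ lam (fun p : (j : Fin m) × Fin (k j) => D p.1 p.2)
      = ∑ j, ((k j : ℝ) / ((∑ j', k j' : ℕ) : ℝ)) •
          ((Ring.inverse (empiricalOperator φ (D j) + lam • (1 : H →L[ℝ] H))
            - Ring.inverse
                (empiricalOperator φ (fun p : (j : Fin m) × Fin (k j) => D p.1 p.2)
                  + lam • (1 : H →L[ℝ] H)))
            ((k j : ℝ)⁻¹ • (∑ i, ((D j i).2 - ⟪fLam ρ φ L lam, φ (D j i).1⟫) • φ (D j i).1)
              - ∫ z : X × ℝ, (z.2 - ⟪fLam ρ φ L lam, φ z.1⟫) • φ z.1 ∂ρ)) := by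
  classical
  -- trivial case m = 0
  rcases Nat.eq_zero_or_pos m with hm | hm
  · subst hm
    simp [rlsEstimator, Finset.univ_eq_empty]
  -- notation
  have hLpos : ∀ f : H, 0 ≤ ⟪L f, f⟫ := by
    intro f
    rw [hL f, real_inner_comm, ← integral_inner (integrable_inner_smul ρ φ hφ κ hκ f)]
    apply integral_nonneg
    intro x
    show (0:ℝ) ≤ ⟪f, (⟪f, φ x⟫ : ℝ) • φ x⟫
    rw [real_inner_smul_right]
    exact mul_self_nonneg _
  have hUL : IsUnit (L + lam • (1 : H →L[ℝ] H)) := isUnit_add_smul_one L hLpos hlam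
  set fl := fLam ρ φ L lam with hfl
  have hc : ∫ z : X × ℝ, (z.2 - ⟪fl, φ z.1⟫) • φ z.1 ∂ρ = lam • fl :=
    integral_xi ρ φ hφ κ hκ L hL hy2 lam hUL
  set Dfull : ((j : Fin m) × Fin (k j)) → X × ℝ := fun p => D p.1 p.2 with hDfull
  set N : ℕ := ∑ j', k j' with hN
  have hN0 : 0 < N := by
    rw [hN]
    exact Finset.sum_pos (fun j _ => hk j) ⟨⟨0, hm⟩, Finset.mem_univ _⟩
  have hNR : (0:ℝ) < (N:ℝ) := by exact_mod_cast hN0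
  set w : Fin m → ℝ := fun j => (k j : ℝ) / (N : ℝ) with hw
  set Aj : Fin m → (H →L[ℝ] H) := fun j => empiricalOperator φ (D j) + lam • (1 : H →L[ℝ] H)
    with hAj
  set Af : H →L[ℝ] H := empiricalOperator φ Dfull + lam • (1 : H →L[ℝ] H) with hAf
  have hUAj : ∀ j, IsUnit (Aj j) := fun j =>
    isUnit_add_smul_one _ (empiricalOperator_pos φ (D j)) hlam
  have hUAf : IsUnit Af := isUnit_add_smul_one _ (empiricalOperator_pos φ Dfull) hlam
  set Bj : Fin m → (H →L[ℝ] H) := fun j => Ring.inverse (Aj j) with hBj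
  set Bf : H →L[ℝ] H := Ring.inverse Af with hBf
  have hBAj : ∀ j (v : H), Bj j (Aj j v) = v := by
    intro j v
    rw [hBj, ← ContinuousLinearMap.mul_apply, Ring.inverse_mul_cancel _ (hUAj j),
      ContinuousLinearMap.one_apply]
  have hBAf : ∀ v : H, Bf (Af v) = v := by
    intro v
    rw [hBf, ← ContinuousLinearMap.mul_apply, Ring.inverse_mul_cancel _ hUAf,
      ContinuousLinearMap.one_apply]
  set gj : (j : Fin m) → H := fun j => (k j : ℝ)⁻¹ • ∑ i, (D j i).2 • φ (D j i).1 with hgj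
  set gf : H := (N : ℝ)⁻¹ • ∑ p : (j : Fin m) × Fin (k j), (Dfull p).2 • φ (Dfull p).1
    with hgf
  have cardSigma : (Fintype.card ((j : Fin m) × Fin (k j)) : ℝ) = (N : ℝ) := by
    rw [Fintype.card_sigma]
    simp [hN]
  -- rls identifications
  have hrlsj : ∀ j, rlsEstimator φ lam (D j) = Bj j (gj j) := by
    intro j
    show Ring.inverse (empiricalOperator φ (D j) + lam • (1 : H →L[ℝ] H))
      ((Fintype.card (Fin (k j)) : ℝ)⁻¹ • ∑ i, (D j i).2 • φ (D j i).1) = _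
    rw [Fintype.card_fin]
  have hrlsf : rlsEstimator φ lam Dfull = Bf gf := by
    show Ring.inverse (empiricalOperator φ Dfull + lam • (1 : H →L[ℝ] H))
      ((Fintype.card ((j : Fin m) × Fin (k j)) : ℝ)⁻¹ • ∑ p, (Dfull p).2 • φ (Dfull p).1) = _
    rw [cardSigma]
  -- Δ identification
  have hΔ : ∀ j, ((k j : ℝ)⁻¹ • (∑ i, ((D j i).2 - ⟪fl, φ (D j i).1⟫) • φ (D j i).1)
      - ∫ z : X × ℝ, (z.2 - ⟪fl, φ z.1⟫) • φ z.1 ∂ρ) = gj j - Aj j fl := by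
    intro j
    rw [hc]
    have hexp : (∑ i, ((D j i).2 - ⟪fl, φ (D j i).1⟫) • φ (D j i).1)
        = (∑ i, (D j i).2 • φ (D j i).1) - ∑ i, (⟪fl, φ (D j i).1⟫ : ℝ) • φ (D j i).1 := by
      rw [← Finset.sum_sub_distrib]
      congr 1
      funext i
      rw [sub_smul]
    rw [hexp, smul_sub]
    have hAjfl : Aj j fl = ((k j : ℝ)⁻¹ • ∑ i, (⟪fl, φ (D j i).1⟫ : ℝ) • φ (D j i).1)
        + lam • fl := by
      rw [hAj]
      simp only [ContinuousLinearMap.add_apply, ContinuousLinearMap.smul_apply,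
        ContinuousLinearMap.one_apply]
      rw [empiricalOperator_apply]
      simp
    rw [hAjfl, hgj]
    abel
  -- weights sum to 1
  have hcast : (N : ℝ) = ∑ j, (k j : ℝ) := by rw [hN]; push_cast; rfl
  have hwsum : ∑ j, w j = 1 := by
    simp only [hw]
    rw [← Finset.sum_div, ← hcast, div_self hNR.ne']
  -- weighted g sum
  have hwk : ∀ j, w j • ((k j : ℝ)⁻¹ • (∑ i, (D j i).2 • φ (D j i).1))
      = (N:ℝ)⁻¹ • ∑ i, (D j i).2 • φ (D j i).1 := by
    intro j
    rw [smul_smul, hw]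
    congr 1
    have hkj : (k j : ℝ) ≠ 0 := by exact_mod_cast (hk j).ne'
    field_simp
  have hgsum : ∑ j, w j • gj j = gf := by
    rw [hgf]
    have : ∑ p : (j : Fin m) × Fin (k j), (Dfull p).2 • φ (Dfull p).1
        = ∑ j, ∑ i, (D j i).2 • φ (D j i).1 := by
      rw [Finset.sum_sigma']
      rfl
    rw [this, Finset.smul_sum]
    refine Finset.sum_congr rfl fun j _ => ?_
    rw [hgj]
    exact hwk j
  -- weighted A sum applied to fl
  have hAsum : ∑ j, w j • (Aj j fl) = Af fl := by
    have hAjfl : ∀ j, Aj j fl = ((k j : ℝ)⁻¹ • ∑ i, (⟪fl, φ (D j i).1⟫ : ℝ) • φ (D j i).1)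
        + lam • fl := by
      intro j
      rw [hAj]
      simp only [ContinuousLinearMap.add_apply, ContinuousLinearMap.smul_apply,
        ContinuousLinearMap.one_apply]
      rw [empiricalOperator_apply]
      simp
    have hAffl : Af fl = ((N : ℝ)⁻¹ • ∑ j, ∑ i, (⟪fl, φ (D j i).1⟫ : ℝ) • φ (D j i).1)
        + lam • fl := by
      rw [hAf]
      simp only [ContinuousLinearMap.add_apply, ContinuousLinearMap.smul_apply,
        ContinuousLinearMap.one_apply]
      rw [empiricalOperator_apply, cardSigma]
      congr 1
      congr 1
      rw [Finset.sum_sigma']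
      rfl
    calc ∑ j, w j • (Aj j fl)
        = ∑ j, (w j • ((k j : ℝ)⁻¹ • ∑ i, (⟪fl, φ (D j i).1⟫ : ℝ) • φ (D j i).1)
            + w j • (lam • fl)) := by
          refine Finset.sum_congr rfl fun j _ => ?_
          rw [hAjfl j, smul_add]
      _ = (∑ j, (N:ℝ)⁻¹ • ∑ i, (⟪fl, φ (D j i).1⟫ : ℝ) • φ (D j i).1)
            + (∑ j, w j) • (lam • fl) := by
          rw [Finset.sum_add_distrib, Finset.sum_smul]
          congr 1
          refine Finset.sum_congr rfl fun j _ => ?_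
          rw [smul_smul, hw]
          congr 1
          have hkj : (k j : ℝ) ≠ 0 := by exact_mod_cast (hk j).ne'
          field_simp
      _ = Af fl := by
          rw [hwsum, one_smul, hAffl, ← Finset.smul_sum]
  -- heart of the computation
  have key : ∀ j, ((Bj j - Bf) (gj j - Aj j fl))
      = (Bj j (gj j) - fl) - Bf (gj j - Aj j fl) := by
    intro j
    rw [ContinuousLinearMap.sub_apply]
    congr 1
    rw [map_sub, hBAj]
  rw [hrlsf]
  calc (∑ j, w j • rlsEstimator φ lam (D j)) - Bf gf
      = (∑ j, (w j • (Bj j (gj j) - fl) + w j • fl)) - Bf gf := by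
        congr 1
        refine Finset.sum_congr rfl fun j _ => ?_
        rw [hrlsj j, smul_sub]
        abel
    _ = ((∑ j, w j • (Bj j (gj j) - fl)) + (∑ j, w j) • fl) - Bf gf := by
        rw [Finset.sum_add_distrib, Finset.sum_smul]
    _ = (∑ j, w j • (Bj j (gj j) - fl)) - (Bf gf - fl) := by
        rw [hwsum, one_smul]; abel
    _ = (∑ j, w j • (Bj j (gj j) - fl)) - Bf (∑ j, w j • (gj j - Aj j fl)) := by
        congr 1
        have : ∑ j, w j • (gj j - Aj j fl) = gf - Af fl := by
          rw [← hgsum, ← hAsum, ← Finset.sum_sub_distrib]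
          refine Finset.sum_congr rfl fun j _ => ?_
          rw [smul_sub]
        rw [this, map_sub, hBAf]
    _ = ∑ j, w j • ((Bj j - Bf) (gj j - Aj j fl)) := by
        rw [map_sum Bf (fun j => w j • (gj j - Aj j fl)) Finset.univ]
        rw [← Finset.sum_sub_distrib]
        refine Finset.sum_congr rfl fun j _ => ?_
        rw [show Bf (w j • (gj j - Aj j fl)) = w j • Bf (gj j - Aj j fl) from
            Bf.map_smul _ _, key j,
          smul_sub (w j) (Bj j (gj j) - fl) (Bf (gj j - Aj j fl))]
    _ = ∑ j, w j • ((Bj j - Bf)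
          ((k j : ℝ)⁻¹ • (∑ i, ((D j i).2 - ⟪fl, φ (D j i).1⟫) • φ (D j i).1)
            - ∫ z : X × ℝ, (z.2 - ⟪fl, φ z.1⟫) • φ z.1 ∂ρ)) := by
        refine Finset.sum_congr rfl fun j _ => ?_
        rw [hΔ j]
end

section
/- Assume the source condition f_ρ = T^r g_ρ holds for some g_ρ ∈ L²(ρ_X) and some 1/2 ≤ r ≤ 1, and for λ > 0 set f_λ := (T + λI)^{−1} T f_ρ ∈ L²(ρ_X). Then f_ρ − f_λ = T^{1/2} h with h := λ (T + λI)^{−1} T^{r−1/2} g_ρ, and ‖h‖_{L²(ρ_X)} ≤ λ^{r−1/2} ‖g_ρ‖_{L²(ρ_X)} (that is, the RKHS norm of f_λ − f_ρ satisfies ‖f_λ − f_ρ‖_K ≤ λ^{r−1/2} ‖g_ρ‖_{L²(ρ_X)}). -/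
open MeasureTheory
open scoped RealInnerProductSpace ENNReal

section Aux

variable {E : Type*} [NormedAddCommGroup E] [InnerProductSpace ℝ E] [CompleteSpace E]

/-- If a continuous linear map is diagonal on a Hilbert basis, its coefficients act
diagonally on every vector. -/
lemma diag_coeff (c : HilbertBasis ℕ ℝ E) (D : E →L[ℝ] E) (d : ℕ → ℝ)
    (hD : ∀ ℓ, D (c ℓ) = d ℓ • c ℓ) (v : E) (ℓ : ℕ) :
    ⟪c ℓ, D v⟫ = d ℓ * ⟪c ℓ, v⟫ := by
  have hdense : Dense (Submodule.span ℝ (Set.range c) : Set E) :=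
    Submodule.dense_iff_topologicalClosure_eq_top.mpr c.dense_span
  have key : (innerSL ℝ (c ℓ)).comp D = d ℓ • innerSL ℝ (c ℓ) := by
    apply ContinuousLinearMap.ext_on hdense
    rintro x ⟨k, rfl⟩
    simp only [ContinuousLinearMap.comp_apply, hD k, ContinuousLinearMap.smul_apply,
      innerSL_apply_apply, real_inner_smul_right]
    by_cases h : ℓ = k
    · subst h; rfl
    · have h0 : ⟪c ℓ, c k⟫ = 0 := c.orthonormal.2 h
      simp [h0]
  have := congrArg (fun f : E →L[ℝ] ℝ => f v) key
  simpa using this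

lemma coeff_ext (c : HilbertBasis ℕ ℝ E) {v w : E}
    (h : ∀ ℓ, ⟪c ℓ, v⟫ = ⟪c ℓ, w⟫) : v = w := by
  have h0 : ∀ ℓ, ⟪c ℓ, v - w⟫ = (0 : ℝ) := by
    intro ℓ; rw [inner_sub_right, h ℓ, sub_self]
  have h1 : ⟪v - w, v - w⟫ = (0 : ℝ) := by
    rw [← c.tsum_inner_mul_inner (v - w) (v - w)]
    have : ∀ ℓ, ⟪v - w, c ℓ⟫ * ⟪c ℓ, v - w⟫ = (0 : ℝ) := by
      intro ℓ; rw [h0 ℓ, mul_zero]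
    simp [this]
  exact sub_eq_zero.mp (inner_self_eq_zero.mp h1)

lemma norm_sq_eq_tsum_coeff (c : HilbertBasis ℕ ℝ E) (v : E) :
    ‖v‖ ^ 2 = ∑' ℓ, ⟪c ℓ, v⟫ ^ 2 := by
  rw [← real_inner_self_eq_norm_sq, ← c.tsum_inner_mul_inner v v]
  congr 1; funext ℓ; rw [real_inner_comm v (c ℓ)]; ring

lemma summable_coeff_sq (c : HilbertBasis ℕ ℝ E) (v : E) :
    Summable (fun ℓ => ⟪c ℓ, v⟫ ^ 2) := by
  have := c.summable_inner_mul_inner v v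
  refine this.congr fun ℓ => ?_
  rw [real_inner_comm v (c ℓ)]; ring

lemma norm_le_of_coeff (c : HilbertBasis ℕ ℝ E) {v w : E} (C : ℝ) (hC : 0 ≤ C)
    (h : ∀ ℓ, |⟪c ℓ, v⟫| ≤ C * |⟪c ℓ, w⟫|) : ‖v‖ ≤ C * ‖w‖ := by
  have hsq : ‖v‖ ^ 2 ≤ (C * ‖w‖) ^ 2 := by
    rw [norm_sq_eq_tsum_coeff c v, mul_pow, norm_sq_eq_tsum_coeff c w, ← tsum_mul_left]
    refine Summable.tsum_le_tsum (fun ℓ => ?_) (summable_coeff_sq c v)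
      ((summable_coeff_sq c w).mul_left _)
    have := mul_le_mul (h ℓ) (h ℓ) (abs_nonneg _) (le_trans (abs_nonneg _) (h ℓ))
    calc ⟪c ℓ, v⟫ ^ 2 = |⟪c ℓ, v⟫| * |⟪c ℓ, v⟫| := by rw [← sq, sq_abs]
      _ ≤ (C * |⟪c ℓ, w⟫|) * (C * |⟪c ℓ, w⟫|) := this
      _ = C ^ 2 * ⟪c ℓ, w⟫ ^ 2 := by
          rw [mul_mul_mul_comm, ← sq, ← sq, sq_abs]
  have h1 : ‖v‖ = Real.sqrt (‖v‖ ^ 2) := (Real.sqrt_sq (norm_nonneg _)).symm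
  have h2 : C * ‖w‖ = Real.sqrt ((C * ‖w‖) ^ 2) :=
    (Real.sqrt_sq (mul_nonneg hC (norm_nonneg _))).symm
  rw [h1, h2]
  exact Real.sqrt_le_sqrt hsq

end Aux

/-- **Approximation error bound in the RKHS norm under the source condition (Lemma 13, (25)).**
Let `T` be the integral operator on `L²(ρ_X)` with kernel `⟨φ(x), φ(x')⟩`, diagonalized by a
Hilbert basis `c` with nonnegative eigenvalues `μ`, and let `Tpow r` be its `r`-th power
(defined spectrally, with `Tpow 0 = I`).  Assume the source condition `f_ρ = T^r g_ρ` for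
some `g_ρ ∈ L²(ρ_X)` and `1/2 ≤ r ≤ 1`, and for `λ > 0` set `f_λ := (T + λI)^{−1} T f_ρ`.
Then `f_ρ − f_λ = T^{1/2} h` with `h := λ (T + λI)^{−1} T^{r−1/2} g_ρ`, and
`‖h‖_{L²(ρ_X)} ≤ λ^{r−1/2} ‖g_ρ‖_{L²(ρ_X)}`; that is, the RKHS norm of `f_λ − f_ρ`
satisfies `‖f_λ − f_ρ‖_K ≤ λ^{r−1/2} ‖g_ρ‖_{L²(ρ_X)}`. -/
theorem approximation_error_RKHS_bound
    {X H : Type*} [MeasurableSpace X] [StandardBorelSpace X]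
    [NormedAddCommGroup H] [InnerProductSpace ℝ H] [CompleteSpace H]
    [SecondCountableTopology H] [MeasurableSpace H] [BorelSpace H]
    (ρ : Measure (X × ℝ)) [IsProbabilityMeasure ρ]
    (φ : X → H) (hφ : Measurable φ) (κ : ℝ) (hκ : ∀ x, ‖φ x‖ ≤ κ)
    (hy2 : Integrable (fun z : X × ℝ => z.2 ^ 2) ρ)
    (T : Lp ℝ 2 ρ.fst →L[ℝ] Lp ℝ 2 ρ.fst)
    (hT : ∀ g : Lp ℝ 2 ρ.fst,
      T g =ᵐ[ρ.fst] fun x => ∫ x', ⟪φ x, φ x'⟫ * g x' ∂ρ.fst)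
    (c : HilbertBasis ℕ ℝ (Lp ℝ 2 ρ.fst)) (μ : ℕ → ℝ) (hμ : ∀ ℓ, 0 ≤ μ ℓ)
    (hTc : ∀ ℓ, T (c ℓ) = μ ℓ • c ℓ)
    (Tpow : ℝ → (Lp ℝ 2 ρ.fst →L[ℝ] Lp ℝ 2 ρ.fst))
    (hTpow : ∀ r : ℝ, 0 < r → ∀ ℓ, Tpow r (c ℓ) = (μ ℓ ^ r) • c ℓ)
    (hTpow0 : Tpow 0 = 1)
    (fρ : Lp ℝ 2 ρ.fst)
    (hfρ : ∀ A : Set X, MeasurableSet A →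
      ∫ z in A ×ˢ (Set.univ : Set ℝ), z.2 ∂ρ = ∫ x in A, fρ x ∂ρ.fst)
    (r : ℝ) (hr0 : 1 / 2 ≤ r) (hr1 : r ≤ 1)
    (gρ : Lp ℝ 2 ρ.fst) (hsource : fρ = Tpow r gρ)
    (lam : ℝ) (hlam : 0 < lam) :
    fρ - Ring.inverse (T + lam • (1 : Lp ℝ 2 ρ.fst →L[ℝ] Lp ℝ 2 ρ.fst)) (T fρ)
        = Tpow (1 / 2)
            (lam • Ring.inverse (T + lam • (1 : Lp ℝ 2 ρ.fst →L[ℝ] Lp ℝ 2 ρ.fst))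
              (Tpow (r - 1 / 2) gρ)) ∧
    ‖lam • Ring.inverse (T + lam • (1 : Lp ℝ 2 ρ.fst →L[ℝ] Lp ℝ 2 ρ.fst))
        (Tpow (r - 1 / 2) gρ)‖
      ≤ lam ^ (r - 1 / 2) * ‖gρ‖ := by
  classical
  set A : Lp ℝ 2 ρ.fst →L[ℝ] Lp ℝ 2 ρ.fst :=
    T + lam • (1 : Lp ℝ 2 ρ.fst →L[ℝ] Lp ℝ 2 ρ.fst) with hA
  set a : ℕ → ℝ := fun ℓ => μ ℓ + lam with ha
  have hapos : ∀ ℓ, 0 < a ℓ := fun ℓ => add_pos_of_nonneg_of_pos (hμ ℓ) hlam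
  have hane : ∀ ℓ, a ℓ ≠ 0 := fun ℓ => (hapos ℓ).ne'
  have hAc : ∀ ℓ, A (c ℓ) = a ℓ • c ℓ := by
    intro ℓ
    simp only [hA, ContinuousLinearMap.add_apply, ContinuousLinearMap.smul_apply,
      ContinuousLinearMap.one_apply, hTc ℓ, ha, add_smul]
  -- coefficient computations
  have coeffA : ∀ v ℓ, ⟪c ℓ, A v⟫ = a ℓ * ⟪c ℓ, v⟫ := fun v ℓ => diag_coeff c A a hAc v ℓ
  have coeffT : ∀ v ℓ, ⟪c ℓ, T v⟫ = μ ℓ * ⟪c ℓ, v⟫ := fun v ℓ => diag_coeff c T μ hTc v ℓ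
  have coeffPow : ∀ s : ℝ, 0 ≤ s → ∀ v ℓ, ⟪c ℓ, Tpow s v⟫ = μ ℓ ^ s * ⟪c ℓ, v⟫ := by
    intro s hs v ℓ
    rcases hs.eq_or_lt with h | h
    · rw [← h, hTpow0]
      simp [Real.rpow_zero]
    · exact diag_coeff c (Tpow s) (fun ℓ => μ ℓ ^ s) (hTpow s h) v ℓ
  -- A is bounded below
  have hbelow : ∀ v : Lp ℝ 2 ρ.fst, ‖v‖ ≤ lam⁻¹ * ‖A v‖ := by
    intro v
    have hterm : ∀ ℓ, ⟪A v, c ℓ⟫ * ⟪c ℓ, v⟫ = a ℓ * ⟪c ℓ, v⟫ ^ 2 := by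
      intro ℓ
      have h1 : ⟪A v, c ℓ⟫ = a ℓ * ⟪c ℓ, v⟫ := by
        exact (real_inner_comm (A v) (c ℓ)).symm.trans (coeffA v ℓ)
      rw [h1]; ring
    have hsum1 : Summable (fun ℓ => a ℓ * ⟪c ℓ, v⟫ ^ 2) := by
      refine (c.summable_inner_mul_inner (A v) v).congr fun ℓ => hterm ℓ
    have hinner : ⟪A v, v⟫ = ∑' ℓ, a ℓ * ⟪c ℓ, v⟫ ^ 2 := by
      rw [← c.tsum_inner_mul_inner (A v) v]
      exact tsum_congr hterm
    have hge : lam * ‖v‖ ^ 2 ≤ ⟪A v, v⟫ := by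
      rw [hinner, norm_sq_eq_tsum_coeff c v, ← tsum_mul_left]
      refine Summable.tsum_le_tsum (fun ℓ => ?_) ((summable_coeff_sq c v).mul_left _) hsum1
      have : lam ≤ a ℓ := le_add_of_nonneg_left (hμ ℓ)
      exact mul_le_mul_of_nonneg_right this (sq_nonneg _)
    have hcs : ⟪A v, v⟫ ≤ ‖A v‖ * ‖v‖ := real_inner_le_norm (A v) v
    rcases eq_or_lt_of_le (norm_nonneg v) with h0 | h0
    · rw [← h0]; positivity
    · have : lam * ‖v‖ ^ 2 ≤ ‖A v‖ * ‖v‖ := le_trans hge hcs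
      rw [sq] at this
      have h2 : lam * ‖v‖ ≤ ‖A v‖ := by
        have := (mul_le_mul_iff_of_pos_right h0).mp (by linarith [this] : lam * ‖v‖ * ‖v‖ ≤ ‖A v‖ * ‖v‖)
        linarith
      rw [le_inv_mul_iff₀ hlam]
      linarith
  have hinjker : A.ker = ⊥ := by
    rw [LinearMap.ker_eq_bot']
    intro v hv
    have := hbelow v
    rw [show A v = 0 from hv] at this
    simp only [norm_zero, mul_zero] at this
    exact norm_le_zero_iff.mp this
  have hanti : AntilipschitzWith ⟨lam⁻¹, inv_nonneg.mpr hlam.le⟩ ⇑A := by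
    apply AddMonoidHomClass.antilipschitz_of_bound
    intro v; exact hbelow v
  have hclosed : IsClosed (A.range : Set (Lp ℝ 2 ρ.fst)) := by
    rw [LinearMap.coe_range]
    exact hanti.isClosed_range A.uniformContinuous
  have hsurj : A.range = ⊤ := by
    have hsub : Set.range ⇑c ⊆ (A.range : Set (Lp ℝ 2 ρ.fst)) := by
      rintro x ⟨ℓ, rfl⟩
      refine ⟨(a ℓ)⁻¹ • c ℓ, show A ((a ℓ)⁻¹ • c ℓ) = c ℓ from ?_⟩
      rw [_root_.map_smul, hAc ℓ, smul_smul, inv_mul_cancel₀ (hane ℓ), one_smul]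
    have hspan : Submodule.span ℝ (Set.range ⇑c) ≤ A.range :=
      Submodule.span_le.mpr hsub
    have htop : ⊤ ≤ A.range := by
      rw [← c.dense_span]
      calc (Submodule.span ℝ (Set.range ⇑c)).topologicalClosure
          ≤ (A.range).topologicalClosure :=
            Submodule.topologicalClosure_mono hspan
        _ = A.range := IsClosed.submodule_topologicalClosure_eq hclosed
    exact top_le_iff.mp htop
  obtain ⟨S, hAS, hSA⟩ : ∃ S' : Lp ℝ 2 ρ.fst →L[ℝ] Lp ℝ 2 ρ.fst,
      A * S' = 1 ∧ S' * A = 1 := by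
    let e := ContinuousLinearEquiv.ofBijective A hinjker hsurj
    have heA : ∀ v, e v = A v := fun v =>
      congrFun (ContinuousLinearEquiv.coeFn_ofBijective A hinjker hsurj) v
    refine ⟨(e.symm : Lp ℝ 2 ρ.fst →L[ℝ] Lp ℝ 2 ρ.fst), ?_, ?_⟩
    · refine ContinuousLinearMap.ext fun v => ?_
      show A (e.symm v) = v
      rw [← heA (e.symm v), e.apply_symm_apply]
    · refine ContinuousLinearMap.ext fun v => ?_
      show e.symm (A v) = v
      rw [← heA v, e.symm_apply_apply]
  have hRinv : Ring.inverse A = S := by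
    have h : A = ((⟨A, S, hAS, hSA⟩ : (Lp ℝ 2 ρ.fst →L[ℝ] Lp ℝ 2 ρ.fst)ˣ) :
        Lp ℝ 2 ρ.fst →L[ℝ] Lp ℝ 2 ρ.fst) := rfl
    rw [h, Ring.inverse_unit]
    rfl
  have hASv : ∀ v, A (S v) = v := by
    intro v
    have := congrArg (fun f : Lp ℝ 2 ρ.fst →L[ℝ] Lp ℝ 2 ρ.fst => f v) hAS
    simpa using this
  have coeffS : ∀ v ℓ, ⟪c ℓ, S v⟫ = (a ℓ)⁻¹ * ⟪c ℓ, v⟫ := by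
    intro v ℓ
    have h2 : ⟪c ℓ, v⟫ = a ℓ * ⟪c ℓ, S v⟫ := by
      rw [← coeffA (S v) ℓ, hASv]
    rw [h2, ← mul_assoc, inv_mul_cancel₀ (hane ℓ), one_mul]
  have hr0' : (0 : ℝ) < r := lt_of_lt_of_le (by norm_num) hr0
  have hs0 : (0 : ℝ) ≤ r - 1 / 2 := by linarith
  -- coefficient of fρ
  have coefffρ : ∀ ℓ, ⟪c ℓ, fρ⟫ = μ ℓ ^ r * ⟪c ℓ, gρ⟫ := by
    intro ℓ; rw [hsource]; exact coeffPow r hr0'.le gρ ℓ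
  -- the rpow splitting
  have hsplit : ∀ ℓ, μ ℓ ^ (1 / 2 : ℝ) * μ ℓ ^ (r - 1 / 2) = μ ℓ ^ r := by
    intro ℓ
    have hsum : (1:ℝ)/2 + (r - 1/2) = r := by ring
    rw [← Real.rpow_add' (hμ ℓ) (by rw [hsum]; exact hr0'.ne'), hsum]
  constructor
  · -- the identity
    apply coeff_ext c
    intro ℓ
    rw [hRinv, inner_sub_right, coeffS, coeffT, coefffρ ℓ,
      coeffPow (1/2 : ℝ) (by norm_num), real_inner_smul_right, coeffS,
      coeffPow (r - 1/2 : ℝ) hs0]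
    have haml : a ℓ = μ ℓ + lam := rfl
    have hinv : a ℓ * (a ℓ)⁻¹ = 1 := mul_inv_cancel₀ (hane ℓ)
    linear_combination (-(lam * (a ℓ)⁻¹ * ⟪c ℓ, gρ⟫)) * hsplit ℓ +
      (-(μ ℓ ^ r * ⟪c ℓ, gρ⟫)) * hinv + ((a ℓ)⁻¹ * μ ℓ ^ r * ⟪c ℓ, gρ⟫) * haml
  · -- the norm bound
    rw [hRinv]
    apply norm_le_of_coeff c _ (Real.rpow_nonneg hlam.le _)
    intro ℓ
    rw [real_inner_smul_right, coeffS, coeffPow (r - 1/2 : ℝ) hs0]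
    have hexp : (r - 1/2) + (1 - (r - 1/2)) = (1:ℝ) := by ring
    have hfac : lam * ((a ℓ)⁻¹ * μ ℓ ^ (r - 1/2)) ≤ lam ^ (r - 1/2) := by
      have h1 : μ ℓ ^ (r - 1/2) ≤ a ℓ ^ (r - 1/2) :=
        Real.rpow_le_rpow (hμ ℓ) (le_add_of_nonneg_right hlam.le) hs0
      have h2 : lam ^ (1 - (r - 1/2)) ≤ a ℓ ^ (1 - (r - 1/2)) :=
        Real.rpow_le_rpow hlam.le (le_add_of_nonneg_left (hμ ℓ)) (by linarith)
      have key : μ ℓ ^ (r - 1/2) * lam ^ (1 - (r - 1/2)) ≤ a ℓ := by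
        calc μ ℓ ^ (r - 1/2) * lam ^ (1 - (r - 1/2))
            ≤ a ℓ ^ (r - 1/2) * a ℓ ^ (1 - (r - 1/2)) :=
              mul_le_mul h1 h2 (Real.rpow_nonneg hlam.le _) (Real.rpow_nonneg (hapos ℓ).le _)
          _ = a ℓ ^ ((r - 1/2) + (1 - (r - 1/2))) := (Real.rpow_add (hapos ℓ) _ _).symm
          _ = a ℓ := by rw [hexp, Real.rpow_one]
      have hlamsplit : lam ^ (r - 1/2) * lam ^ (1 - (r - 1/2)) = lam := by
        rw [← Real.rpow_add hlam, hexp, Real.rpow_one]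
      have hmul : lam * μ ℓ ^ (r - 1/2) ≤ lam ^ (r - 1/2) * a ℓ := by
        calc lam * μ ℓ ^ (r - 1/2)
            = lam ^ (r - 1/2) * (μ ℓ ^ (r - 1/2) * lam ^ (1 - (r - 1/2))) := by
              linear_combination (-(μ ℓ ^ (r - 1/2))) * hlamsplit
          _ ≤ lam ^ (r - 1/2) * a ℓ :=
              mul_le_mul_of_nonneg_left key (Real.rpow_nonneg hlam.le _)
      rw [show lam * ((a ℓ)⁻¹ * μ ℓ ^ (r - 1/2)) = lam * μ ℓ ^ (r - 1/2) / a ℓ by ring,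
        div_le_iff₀ (hapos ℓ)]
      exact hmul
    have hfacnn : 0 ≤ lam * ((a ℓ)⁻¹ * μ ℓ ^ (r - 1/2)) :=
      mul_nonneg hlam.le (mul_nonneg (inv_nonneg.mpr (hapos ℓ).le)
        (Real.rpow_nonneg (hμ ℓ) _))
    rw [show lam * ((a ℓ)⁻¹ * (μ ℓ ^ (r - 1/2) * ⟪c ℓ, gρ⟫)) =
      (lam * ((a ℓ)⁻¹ * μ ℓ ^ (r - 1/2))) * ⟪c ℓ, gρ⟫ by ring, abs_mul,
      abs_of_nonneg hfacnn]
    exact mul_le_mul_of_nonneg_right hfac (abs_nonneg _)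
end
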